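/- Let u : D → ℝ be a C² function on a planar domain and x ∈ D with ∇u(x) ≠ 0. Then lim_{r→0} (1/r²) [ (1/2)(sup_{B(x,r)} u + inf_{B(x,r)} u) − u(x) ] = Δ_∞ u(x) / (2|∇u(x)|²), where Δ_∞ u = Σ_{i,j} u_{x_i x_j} u_{x_i} u_{x_j}. -/

import Mathlib

open Metric Filter

section Aux
variable {E : Type*} [NormedAddCommGroup E] [NormedSpace ℝ E]

lemma aux_closure_le {s : Set ℝ} {c y : ℝ} (hy : y ∈ closure s) (h : ∀ z ∈ s, z ≤ c) :
    y ≤ c :=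
  closure_minimal (fun z hz => h z hz) isClosed_Iic hy

lemma aux_closure_ge {s : Set ℝ} {c y : ℝ} (hy : y ∈ closure s) (h : ∀ z ∈ s, c ≤ z) :
    c ≤ y :=
  closure_minimal (fun z hz => h z hz) isClosed_Ici hy

lemma aux_symm {u : E → ℝ} {D : Set E} (hD : IsOpen D) (hu : ContDiffOn ℝ 2 u D)
    {x : E} (hx : x ∈ D) (v w : E) :
    fderiv ℝ (fderiv ℝ u) x v w = fderiv ℝ (fderiv ℝ u) x w v := by
  have hxD : D ∈ nhds x := hD.mem_nhds hx
  have hct : ContDiffAt ℝ 2 u x := (hu.contDiffAt hxD)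
  have hB : HasFDerivAt (fderiv ℝ u) (fderiv ℝ (fderiv ℝ u) x) x := by
    have h1 : ContDiffAt ℝ 1 (fderiv ℝ u) x := hct.fderiv_right (by norm_num)
    exact (h1.differentiableAt (by norm_num)).hasFDerivAt
  apply second_derivative_symmetric_of_eventually (f := u) ?_ hB v w
  filter_upwards [hxD] with y hy using
    ((hu.contDiffAt (hD.mem_nhds hy)).differentiableAt (by norm_num)).hasFDerivAt

lemma aux_taylor {u : E → ℝ} {D : Set E} (hD : IsOpen D) (hu : ContDiffOn ℝ 2 u D)
    {x : E} (hx : x ∈ D) {ε : ℝ} (hε : 0 < ε) :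
    ∃ δ > (0:ℝ), ball x δ ⊆ D ∧ ∀ h : E, ‖h‖ < δ →
      |u (x + h) - u x - fderiv ℝ u x h - fderiv ℝ (fderiv ℝ u) x h h / 2| ≤ ε * ‖h‖ ^ 2 := by
  classical
  set p := fderiv ℝ u x with hpdef
  set B := fderiv ℝ (fderiv ℝ u) x with hBdef
  have hxD : D ∈ nhds x := hD.mem_nhds hx
  have hct : ContDiffAt ℝ 2 u x := hu.contDiffAt hxD
  have hdiff : ∀ y ∈ D, DifferentiableAt ℝ u y := fun y hy =>
    (hu.contDiffAt (hD.mem_nhds hy)).differentiableAt (by norm_num)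
  have hB : HasFDerivAt (fderiv ℝ u) B x := by
    have h1 : ContDiffAt ℝ 1 (fderiv ℝ u) x := hct.fderiv_right (by norm_num)
    exact (h1.differentiableAt (by norm_num)).hasFDerivAt
  have hsymm : ∀ v w, B v w = B w v := aux_symm hD hu hx
  have hlo : ∀ᶠ y in nhds x, ‖fderiv ℝ u y - fderiv ℝ u x - B (y - x)‖ ≤ ε * ‖y - x‖ := by
    have := hB.isLittleO.def hε
    simpa using this
  obtain ⟨δ₁, hδ₁pos, hδ₁⟩ := Metric.eventually_nhds_iff_ball.mp hlo
  obtain ⟨δ₂, hδ₂pos, hδ₂⟩ := Metric.isOpen_iff.mp hD x hx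
  refine ⟨min δ₁ δ₂, lt_min hδ₁pos hδ₂pos,
    (ball_subset_ball (min_le_right _ _)).trans hδ₂, ?_⟩
  intro h hh
  set δ := min δ₁ δ₂ with hδdef
  set φ : E → ℝ := fun y => u y - (p y - p x) - (2:ℝ)⁻¹ • ((B (y - x)) (y - x)) with hφdef
  set ψ : E → (E →L[ℝ] ℝ) := fun y => fderiv ℝ u y - p - B (y - x) with hψdef
  have hball : closedBall x ‖h‖ ⊆ ball x δ := fun y hy =>
    lt_of_le_of_lt (mem_closedBall.mp hy) hh
  have hφderiv : ∀ y ∈ closedBall x ‖h‖, HasFDerivWithinAt φ (ψ y) (closedBall x ‖h‖) y := by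
    intro y hy
    have hyD : y ∈ D := (ball_subset_ball (min_le_right _ _)).trans hδ₂ (hball hy)
    have h1 : HasFDerivAt u (fderiv ℝ u y) y := (hdiff y hyD).hasFDerivAt
    have h2 : HasFDerivAt (fun z => p z - p x) p y := by
      simpa using (p.hasFDerivAt (x := y)).sub_const (p x)
    have hbb := (B.isBoundedBilinearMap).hasFDerivAt (y - x, y - x)
    have hG : HasFDerivAt (fun z : E => (z - x, z - x))
        ((ContinuousLinearMap.id ℝ E).prod (ContinuousLinearMap.id ℝ E)) y :=
      ((hasFDerivAt_id y).sub_const x).prodMk ((hasFDerivAt_id y).sub_const x)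
    have h3 : HasFDerivAt (fun z : E => (B (z - x)) (z - x))
        ((B.isBoundedBilinearMap.deriv (y - x, y - x)).comp
          ((ContinuousLinearMap.id ℝ E).prod (ContinuousLinearMap.id ℝ E))) y :=
      by have := hbb.comp y hG; exact this
    have h4 : HasFDerivAt φ
        (fderiv ℝ u y - p -
          (2:ℝ)⁻¹ • ((B.isBoundedBilinearMap.deriv (y - x, y - x)).comp
            ((ContinuousLinearMap.id ℝ E).prod (ContinuousLinearMap.id ℝ E)))) y :=
      (h1.sub h2).sub (h3.const_smul ((2:ℝ)⁻¹))
    have heq : (fderiv ℝ u y - p -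
          (2:ℝ)⁻¹ • ((B.isBoundedBilinearMap.deriv (y - x, y - x)).comp
            ((ContinuousLinearMap.id ℝ E).prod (ContinuousLinearMap.id ℝ E)))) = ψ y := by
      ext z
      simp [ψ, IsBoundedBilinearMap.deriv_apply, hsymm z (y - x), smul_eq_mul]
      ring
    exact (heq ▸ h4).hasFDerivWithinAt
  have hbound : ∀ y ∈ closedBall x ‖h‖, ‖ψ y‖ ≤ ε * ‖h‖ := by
    intro y hy
    have h1 : ‖ψ y‖ ≤ ε * ‖y - x‖ := by
      have := hδ₁ y (ball_subset_ball (min_le_left _ _) (hball hy))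
      simpa [ψ] using this
    refine h1.trans ?_
    have h2 : ‖y - x‖ ≤ ‖h‖ := by simpa [dist_eq_norm] using mem_closedBall.mp hy
    nlinarith [hε.le]
  have hx1 : x ∈ closedBall x ‖h‖ := mem_closedBall_self (norm_nonneg h)
  have hx2 : x + h ∈ closedBall x ‖h‖ := by simp [dist_eq_norm]
  have hmv := Convex.norm_image_sub_le_of_norm_hasFDerivWithin_le hφderiv hbound
    (convex_closedBall x ‖h‖) hx1 hx2
  have hφdiff : φ (x + h) - φ x = u (x + h) - u x - p h - (B h) h / 2 := by
    simp [φ, add_sub_cancel_left, map_sub, smul_eq_mul]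
    ring
  calc |u (x + h) - u x - p h - (B h) h / 2|
      = ‖φ (x + h) - φ x‖ := by rw [hφdiff, Real.norm_eq_abs]
    _ ≤ ε * ‖h‖ * ‖x + h - x‖ := hmv
    _ = ε * ‖h‖ ^ 2 := by rw [add_sub_cancel_left]; ring

end Aux
set_option maxHeartbeats 1000000 in
theorem asymptotic_midrange_infinity_laplacian
    (D : Set (EuclideanSpace ℝ (Fin 2))) (hD : IsOpen D)
    (u : EuclideanSpace ℝ (Fin 2) → ℝ) (hu : ContDiffOn ℝ 2 u D)
    (x : EuclideanSpace ℝ (Fin 2)) (hx : x ∈ D) (hgrad : fderiv ℝ u x ≠ 0) :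
    Tendsto (fun r : ℝ =>
        (1 / r ^ 2) * ((sSup (u '' ball x r) + sInf (u '' ball x r)) / 2 - u x))
      (nhdsWithin 0 (Set.Ioi 0))
      (nhds ((∑ i : Fin 2, ∑ j : Fin 2,
          iteratedFDeriv ℝ 2 u x ![EuclideanSpace.basisFun (Fin 2) ℝ i,
              EuclideanSpace.basisFun (Fin 2) ℝ j] *
            fderiv ℝ u x (EuclideanSpace.basisFun (Fin 2) ℝ i) *
            fderiv ℝ u x (EuclideanSpace.basisFun (Fin 2) ℝ j)) /
        (2 * ‖fderiv ℝ u x‖ ^ 2))) := by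
  classical
  set p := fderiv ℝ u x with hpdef
  set B := fderiv ℝ (fderiv ℝ u) x with hBdef
  set e := EuclideanSpace.basisFun (Fin 2) ℝ with hedef
  have hsymm : ∀ v w, B v w = B w v := aux_symm hD hu hx
  have hP : 0 < ‖p‖ := norm_pos_iff.mpr hgrad
  set g := (InnerProductSpace.toDual ℝ (EuclideanSpace ℝ (Fin 2))).symm p with hgdef
  have hpg : ∀ h, p h = (inner ℝ g h : ℝ) := fun h => (InnerProductSpace.toDual_symm_apply).symm
  have hgnorm : ‖g‖ = ‖p‖ := LinearIsometryEquiv.norm_map _ p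
  have hgpos : 0 < ‖g‖ := hgnorm ▸ hP
  set ν := ‖g‖⁻¹ • g with hνdef
  have hν1 : ‖ν‖ = 1 := by
    rw [hνdef, norm_smul, Real.norm_eq_abs, abs_of_pos (inv_pos.mpr hgpos)]
    field_simp
  have hpν : p ν = ‖p‖ := by
    rw [hνdef, map_smul, smul_eq_mul, hpg, real_inner_self_eq_norm_sq, ← hgnorm]
    field_simp
  have hinnerν : ∀ h, (inner ℝ ν h : ℝ) = p h / ‖p‖ := by
    intro h
    rw [hνdef, real_inner_smul_left, ← hpg, hgnorm]
    ring
  set C := ‖B‖ with hCdef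
  have hC : 0 ≤ C := norm_nonneg B
  have hBννC : |B ν ν| ≤ C := by
    have h1 := B.le_opNorm₂ ν ν
    rw [Real.norm_eq_abs, hν1] at h1
    simpa using h1
  -- rewrite the target value
  have hQ : ∀ i j : Fin 2, iteratedFDeriv ℝ 2 u x ![e i, e j] = B (e i) (e j) := by
    intro i j
    rw [iteratedFDeriv_two_apply]
    simp [← hBdef]
  simp only [hQ]
  have hgsum : g = ∑ i : Fin 2, p (e i) • e i := by
    conv_lhs => rw [← (EuclideanSpace.basisFun (Fin 2) ℝ).sum_repr' g]
    exact Finset.sum_congr rfl fun i _ => by rw [hpg, real_inner_comm]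
  have hsum : B g g = ∑ i : Fin 2, ∑ j : Fin 2, B (e i) (e j) * p (e i) * p (e j) := by
    conv_lhs => rw [hgsum]
    simp only [map_sum, ContinuousLinearMap.sum_apply, map_smul,
      ContinuousLinearMap.smul_apply, smul_eq_mul, Finset.mul_sum]
    rw [Finset.sum_comm]
    exact Finset.sum_congr rfl fun i _ => Finset.sum_congr rfl fun j _ => by ring
  have hb : B ν ν = B g g / ‖g‖ ^ 2 := by
    have h1 : B ν ν = ‖g‖⁻¹ * (‖g‖⁻¹ * (B g g)) := by
      rw [hνdef]
      simp [map_smul, smul_eq_mul]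
    rw [h1, pow_two, eq_div_iff (by positivity : (0:ℝ) < ‖g‖ * ‖g‖).ne']
    field_simp
  have heq : (∑ i : Fin 2, ∑ j : Fin 2, B (e i) (e j) * p (e i) * p (e j)) / (2 * ‖p‖ ^ 2)
      = B ν ν / 2 := by
    rw [← hsum, hb, hgnorm, div_div, mul_comm]
  rw [heq]
  rw [Metric.tendsto_nhdsWithin_nhds]
  intro ε hε
  set ε₁ := ε / 4 with hε₁def
  have hε₁ : 0 < ε₁ := by rw [hε₁def]; linarith
  obtain ⟨δ, hδpos, hδD, hT⟩ := aux_taylor hD hu hx hε₁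
  clear_value p B e g ν C
  have hden : (0:ℝ) < 8 * C ^ 3 + 1 := by
    have := pow_nonneg hC 3
    linarith
  refine ⟨min δ (ε₁ ^ 2 * ‖p‖ / (8 * C ^ 3 + 1)),
    lt_min hδpos (div_pos (mul_pos (pow_pos hε₁ 2) hP) hden), ?_⟩
  intro r hrIoi hrd
  have hr : 0 < r := hrIoi
  have hrlt : r < min δ (ε₁ ^ 2 * ‖p‖ / (8 * C ^ 3 + 1)) := by
    rwa [Real.dist_eq, sub_zero, abs_of_pos hr] at hrd
  have hrδ : r < δ := hrlt.trans_le (min_le_left _ _)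
  have hrR : r * (8 * C ^ 3 + 1) ≤ ε₁ ^ 2 * ‖p‖ := by
    rw [← le_div_iff₀ hden]
    exact (hrlt.trans_le (min_le_right _ _)).le
  -- model functions
  set f : EuclideanSpace ℝ (Fin 2) → ℝ := fun h => p h + B h h / 2 with hfdef
  set fm : EuclideanSpace ℝ (Fin 2) → ℝ := fun h => p h - B h h / 2 with hfmdef
  have hBc : Continuous fun h : EuclideanSpace ℝ (Fin 2) => B h h :=
    (B.isBoundedBilinearMap.continuous).comp (continuous_id.prodMk continuous_id)
  have hfc : Continuous f := p.continuous.add (hBc.div_const 2)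
  have hfmc : Continuous fm := p.continuous.sub (hBc.div_const 2)
  have hffm : ∀ h, f (-h) = -(fm h) := by
    intro h
    simp only [hfdef, hfmdef, map_neg, ContinuousLinearMap.neg_apply, neg_neg]
    ring
  -- maximizers
  have hKc : IsCompact (closedBall (0 : EuclideanSpace ℝ (Fin 2)) r) := isCompact_closedBall _ _
  have hKne : (closedBall (0 : EuclideanSpace ℝ (Fin 2)) r).Nonempty :=
    ⟨0, mem_closedBall_self hr.le⟩
  obtain ⟨h₀, h₀K, hmax₀⟩ := hKc.exists_isMaxOn hKne hfc.continuousOn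
  obtain ⟨h₁, h₁K, hmax₁⟩ := hKc.exists_isMaxOn hKne hfmc.continuousOn
  have hmax₀' : ∀ y ∈ closedBall (0 : EuclideanSpace ℝ (Fin 2)) r, f y ≤ f h₀ :=
    fun y hy => hmax₀ hy
  have hmax₁' : ∀ y ∈ closedBall (0 : EuclideanSpace ℝ (Fin 2)) r, fm y ≤ fm h₁ :=
    fun y hy => hmax₁ hy
  have hcl : ∀ h ∈ closedBall (0 : EuclideanSpace ℝ (Fin 2)) r,
      f h ∈ closure (f '' ball (0 : EuclideanSpace ℝ (Fin 2)) r) := by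
    intro h hK
    have h1 : h ∈ closure (ball (0 : EuclideanSpace ℝ (Fin 2)) r) := by
      rw [closure_ball (0 : EuclideanSpace ℝ (Fin 2)) hr.ne']
      exact hK
    exact image_closure_subset_closure_image hfc (Set.mem_image_of_mem f h1)
  -- Taylor bound on the ball
  have hTr : ∀ h ∈ ball (0 : EuclideanSpace ℝ (Fin 2)) r, |u (x + h) - u x - f h| ≤ ε₁ * r ^ 2 := by
    intro h hh
    have hn : ‖h‖ < r := mem_ball_zero_iff.mp hh
    have ht := hT h (hn.trans hrδ)
    rw [← hpdef, ← hBdef] at ht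
    have he : u (x + h) - u x - p h - B h h / 2 = u (x + h) - u x - f h := by
      simp only [hfdef]; ring
    rw [he] at ht
    refine ht.trans ?_
    have h2 : ‖h‖ ^ 2 ≤ r ^ 2 := pow_le_pow_left₀ (norm_nonneg h) hn.le 2
    exact mul_le_mul_of_nonneg_left h2 hε₁.le
  -- bounds on u-image
  have hne : (u '' ball x r).Nonempty := ⟨u x, x, mem_ball_self hr, rfl⟩
  have hub : ∀ y ∈ u '' ball x r, y ≤ u x + f h₀ + ε₁ * r ^ 2 := by
    rintro _ ⟨z, hz, rfl⟩
    have hzb : z - x ∈ ball (0 : EuclideanSpace ℝ (Fin 2)) r := by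
      rw [mem_ball_zero_iff]
      exact mem_ball_iff_norm.mp hz
    have ht := hTr (z - x) hzb
    rw [add_sub_cancel] at ht
    have h2 : f (z - x) ≤ f h₀ := hmax₀' _ (ball_subset_closedBall hzb)
    have := (abs_le.mp ht).2
    linarith
  have hlb : ∀ y ∈ u '' ball x r, u x - fm h₁ - ε₁ * r ^ 2 ≤ y := by
    rintro _ ⟨z, hz, rfl⟩
    have hzb : z - x ∈ ball (0 : EuclideanSpace ℝ (Fin 2)) r := by
      rw [mem_ball_zero_iff]
      exact mem_ball_iff_norm.mp hz
    have ht := hTr (z - x) hzb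
    rw [add_sub_cancel] at ht
    have h2 : fm (-(z - x)) ≤ fm h₁ := by
      refine hmax₁' _ ?_
      rw [mem_closedBall_zero_iff, norm_neg]
      exact (mem_ball_zero_iff.mp hzb).le
    have h3 : f (z - x) = -(fm (-(z - x))) := by rw [← hffm, neg_neg]
    have := (abs_le.mp ht).1
    linarith
  have hbddA : BddAbove (u '' ball x r) := ⟨_, hub⟩
  have hbddI : BddBelow (u '' ball x r) := ⟨_, hlb⟩
  have hAub : sSup (u '' ball x r) ≤ u x + f h₀ + ε₁ * r ^ 2 := csSup_le hne hub
  have hIlb : u x - fm h₁ - ε₁ * r ^ 2 ≤ sInf (u '' ball x r) := le_csInf hne hlb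
  have hAlb : u x + f h₀ - ε₁ * r ^ 2 ≤ sSup (u '' ball x r) := by
    have h1 : ∀ z ∈ f '' ball (0 : EuclideanSpace ℝ (Fin 2)) r,
        z ≤ sSup (u '' ball x r) - u x + ε₁ * r ^ 2 := by
      rintro _ ⟨h, hh, rfl⟩
      have ht := hTr h hh
      have hmem : x + h ∈ ball x r := by
        rw [mem_ball_iff_norm, add_sub_cancel_left]
        exact mem_ball_zero_iff.mp hh
      have h2 : u (x + h) ≤ sSup (u '' ball x r) := le_csSup hbddA ⟨x + h, hmem, rfl⟩
      have := (abs_le.mp ht).1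
      linarith
    have h2 := aux_closure_le (hcl h₀ h₀K) h1
    linarith
  have hIub : sInf (u '' ball x r) ≤ u x - fm h₁ + ε₁ * r ^ 2 := by
    have h1 : ∀ z ∈ f '' ball (0 : EuclideanSpace ℝ (Fin 2)) r,
        sInf (u '' ball x r) - u x - ε₁ * r ^ 2 ≤ z := by
      rintro _ ⟨h, hh, rfl⟩
      have ht := hTr h hh
      have hmem : x + h ∈ ball x r := by
        rw [mem_ball_iff_norm, add_sub_cancel_left]
        exact mem_ball_zero_iff.mp hh
      have h2 : sInf (u '' ball x r) ≤ u (x + h) := csInf_le hbddI ⟨x + h, hmem, rfl⟩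
      have := (abs_le.mp ht).2
      linarith
    have hmem : -h₁ ∈ closedBall (0 : EuclideanSpace ℝ (Fin 2)) r := by
      rw [mem_closedBall_zero_iff, norm_neg]
      exact mem_closedBall_zero_iff.mp h₁K
    have h2 := aux_closure_ge (hcl (-h₁) hmem) h1
    rw [hffm h₁] at h2
    linarith
  -- model analysis
  have hrν : r • ν ∈ closedBall (0 : EuclideanSpace ℝ (Fin 2)) r := by
    rw [mem_closedBall_zero_iff, norm_smul, hν1, mul_one, Real.norm_eq_abs, abs_of_pos hr]
  have hBrν : B (r • ν) (r • ν) = r ^ 2 * (B ν ν) := by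
    simp [map_smul, smul_eq_mul]
    ring
  have hprν : p (r • ν) = r * ‖p‖ := by rw [map_smul, smul_eq_mul, hpν]
  have hfrν : f (r • ν) = r * ‖p‖ + r ^ 2 * (B ν ν) / 2 := by
    simp only [hfdef, hBrν, hprν]
  have hfmrν : fm (r • ν) = r * ‖p‖ - r ^ 2 * (B ν ν) / 2 := by
    simp only [hfmdef, hBrν, hprν]
  have hlow₀ : r * ‖p‖ + r ^ 2 * (B ν ν) / 2 ≤ f h₀ := hfrν ▸ hmax₀' _ hrν
  have hlow₁ : r * ‖p‖ - r ^ 2 * (B ν ν) / 2 ≤ fm h₁ := hfmrν ▸ hmax₁' _ hrν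
  have hBhhK : ∀ h ∈ closedBall (0 : EuclideanSpace ℝ (Fin 2)) r, |B h h| ≤ C * r ^ 2 := by
    intro h hK
    have h1 := B.le_opNorm₂ h h
    have h2 : ‖h‖ ≤ r := mem_closedBall_zero_iff.mp hK
    rw [Real.norm_eq_abs, ← hCdef] at h1
    refine h1.trans ?_
    calc C * ‖h‖ * ‖h‖ ≤ C * r * r :=
          mul_le_mul (mul_le_mul_of_nonneg_left h2 hC) h2 (norm_nonneg h) (mul_nonneg hC hr.le)
      _ = C * r ^ 2 := by ring
  have hc1 : -(C * r ^ 2) ≤ r ^ 2 * (B ν ν) := by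
    have h1 := mul_le_mul_of_nonneg_left (abs_le.mp hBννC).1 (sq_nonneg r)
    calc -(C * r ^ 2) = r ^ 2 * (-C) := by ring
      _ ≤ r ^ 2 * (B ν ν) := h1
  have hc2 : r ^ 2 * (B ν ν) ≤ C * r ^ 2 := by
    have h1 := mul_le_mul_of_nonneg_left (abs_le.mp hBννC).2 (sq_nonneg r)
    calc r ^ 2 * (B ν ν) ≤ r ^ 2 * C := h1
      _ = C * r ^ 2 := by ring
  have hph₀ : r * ‖p‖ - C * r ^ 2 ≤ p h₀ := by
    have h0 : f h₀ = p h₀ + B h₀ h₀ / 2 := by simp only [hfdef]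
    linarith [(abs_le.mp (hBhhK h₀ h₀K)).2, hlow₀, hc1]
  have hph₁ : r * ‖p‖ - C * r ^ 2 ≤ p h₁ := by
    have h0 : fm h₁ = p h₁ - B h₁ h₁ / 2 := by simp only [hfmdef]
    linarith [(abs_le.mp (hBhhK h₁ h₁K)).1, hlow₁, hc2]
  -- quadratic estimate at near-maximizers
  have hquad : ∀ h ∈ closedBall (0 : EuclideanSpace ℝ (Fin 2)) r,
      r * ‖p‖ - C * r ^ 2 ≤ p h → |B h h - r ^ 2 * (B ν ν)| ≤ ε₁ * r ^ 2 := by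
    intro h hK hp
    have hhr : ‖h‖ ≤ r := mem_closedBall_zero_iff.mp hK
    have hrn : ‖r • ν‖ = r := by
      rw [norm_smul, hν1, mul_one, Real.norm_eq_abs, abs_of_pos hr]
    have hip : (inner ℝ h (r • ν) : ℝ) = r * (p h / ‖p‖) := by
      rw [real_inner_smul_right, real_inner_comm, hinnerν]
    have hsq : ‖h - r • ν‖ ^ 2 = ‖h‖ ^ 2 - 2 * (r * (p h / ‖p‖)) + r ^ 2 := by
      rw [norm_sub_sq_real, hip, hrn]
    have e3 : ‖p‖ * ‖h - r • ν‖ ^ 2 = ‖p‖ * ‖h‖ ^ 2 - 2 * r * p h + ‖p‖ * r ^ 2 := by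
      rw [hsq]
      field_simp
    have e1 : ‖p‖ * ‖h‖ ^ 2 ≤ ‖p‖ * r ^ 2 :=
      mul_le_mul_of_nonneg_left (pow_le_pow_left₀ (norm_nonneg h) hhr 2) hP.le
    have e4 : 2 * r ^ 2 * ‖p‖ - 2 * C * r ^ 3 ≤ 2 * r * p h := by
      have h4 := mul_le_mul_of_nonneg_left hp (by linarith : (0:ℝ) ≤ 2 * r)
      calc 2 * r ^ 2 * ‖p‖ - 2 * C * r ^ 3 = 2 * r * (r * ‖p‖ - C * r ^ 2) := by ring
        _ ≤ 2 * r * p h := h4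
    have hsq2 : ‖p‖ * ‖h - r • ν‖ ^ 2 ≤ 2 * C * r ^ 3 := by linarith
    have hXb : |B h h - r ^ 2 * (B ν ν)| ≤ 2 * C * r * ‖h - r • ν‖ := by
      have hdecomp : B h h - r ^ 2 * (B ν ν) = B (h - r • ν) h + B (r • ν) (h - r • ν) := by
        have : B (r • ν) (r • ν) = r ^ 2 * (B ν ν) := hBrν
        simp only [map_sub, ContinuousLinearMap.sub_apply]
        linarith
      have b1 : |B (h - r • ν) h| ≤ C * ‖h - r • ν‖ * r := by
        have h1 := B.le_opNorm₂ (h - r • ν) h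
        rw [Real.norm_eq_abs, ← hCdef] at h1
        exact h1.trans
          (mul_le_mul_of_nonneg_left hhr (mul_nonneg hC (norm_nonneg (h - r • ν))))
      have b2 : |B (r • ν) (h - r • ν)| ≤ C * r * ‖h - r • ν‖ := by
        have h1 := B.le_opNorm₂ (r • ν) (h - r • ν)
        rw [Real.norm_eq_abs, ← hCdef, hrn] at h1
        exact h1
      calc |B h h - r ^ 2 * (B ν ν)| = |B (h - r • ν) h + B (r • ν) (h - r • ν)| := by
            rw [hdecomp]
        _ ≤ |B (h - r • ν) h| + |B (r • ν) (h - r • ν)| := abs_add_le _ _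
        _ ≤ 2 * C * r * ‖h - r • ν‖ := by linarith
    have hfin : (B h h - r ^ 2 * (B ν ν)) ^ 2 ≤ (ε₁ * r ^ 2) ^ 2 := by
      have q1 : (B h h - r ^ 2 * (B ν ν)) ^ 2 ≤ (2 * C * r * ‖h - r • ν‖) ^ 2 := by
        have := pow_le_pow_left₀ (abs_nonneg _) hXb 2
        rwa [sq_abs] at this
      have q2 : ‖p‖ * (2 * C * r * ‖h - r • ν‖) ^ 2 ≤ 8 * C ^ 3 * r ^ 5 := by
        have e : ‖p‖ * (2 * C * r * ‖h - r • ν‖) ^ 2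
            = 4 * C ^ 2 * r ^ 2 * (‖p‖ * ‖h - r • ν‖ ^ 2) := by ring
        rw [e]
        calc 4 * C ^ 2 * r ^ 2 * (‖p‖ * ‖h - r • ν‖ ^ 2)
            ≤ 4 * C ^ 2 * r ^ 2 * (2 * C * r ^ 3) :=
              mul_le_mul_of_nonneg_left hsq2 (by positivity)
          _ = 8 * C ^ 3 * r ^ 5 := by ring
      have q3 : 8 * C ^ 3 * r ^ 5 ≤ ‖p‖ * (ε₁ * r ^ 2) ^ 2 := by
        have e1 : r ^ 5 * (8 * C ^ 3 + 1) ≤ ε₁ ^ 2 * ‖p‖ * r ^ 4 := by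
          have h5 := mul_le_mul_of_nonneg_right hrR (pow_nonneg hr.le 4)
          calc r ^ 5 * (8 * C ^ 3 + 1) = r * (8 * C ^ 3 + 1) * r ^ 4 := by ring
            _ ≤ ε₁ ^ 2 * ‖p‖ * r ^ 4 := h5
        have e2 : 8 * C ^ 3 * r ^ 5 ≤ r ^ 5 * (8 * C ^ 3 + 1) := by
          linarith [pow_nonneg hr.le 5]
        calc 8 * C ^ 3 * r ^ 5 ≤ ε₁ ^ 2 * ‖p‖ * r ^ 4 := by linarith
          _ = ‖p‖ * (ε₁ * r ^ 2) ^ 2 := by ring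
      have q4 : ‖p‖ * (B h h - r ^ 2 * (B ν ν)) ^ 2 ≤ ‖p‖ * (ε₁ * r ^ 2) ^ 2 := by
        have := mul_le_mul_of_nonneg_left q1 hP.le
        linarith
      exact le_of_mul_le_mul_left q4 hP
    have := abs_le_of_sq_le_sq' hfin (mul_nonneg hε₁.le (pow_nonneg hr.le 2))
    exact abs_le.mpr this
  -- combine
  have hmid : |(f h₀ - fm h₁) - r ^ 2 * (B ν ν)| ≤ ε₁ * r ^ 2 := by
    have q0 := hquad h₀ h₀K hph₀
    have q1 := hquad h₁ h₁K hph₁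
    have e1 : fm h₀ = f h₀ - B h₀ h₀ := by simp only [hfdef, hfmdef]; ring
    have e2 : f h₁ = fm h₁ + B h₁ h₁ := by simp only [hfdef, hfmdef]; ring
    have u1 : f h₀ - fm h₁ ≤ B h₀ h₀ := by
      have := hmax₁' h₀ h₀K
      linarith
    have u2 : B h₁ h₁ ≤ f h₀ - fm h₁ := by
      have := hmax₀' h₁ h₁K
      linarith
    rw [abs_le]
    constructor
    · linarith [(abs_le.mp q1).1]
    · linarith [(abs_le.mp q0).2]
  have hAI : |(sSup (u '' ball x r) + sInf (u '' ball x r)) / 2 - u x - r ^ 2 * (B ν ν) / 2|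
      ≤ 3 / 2 * ε₁ * r ^ 2 := by
    have := abs_le.mp hmid
    rw [abs_le]
    constructor <;> [linarith; linarith]
  -- final computation
  have hr2 : (0:ℝ) < r ^ 2 := by positivity
  rw [Real.dist_eq]
  have heval : 1 / r ^ 2 * ((sSup (u '' ball x r) + sInf (u '' ball x r)) / 2 - u x) - B ν ν / 2
      = (1 / r ^ 2) * ((sSup (u '' ball x r) + sInf (u '' ball x r)) / 2 - u x
          - r ^ 2 * (B ν ν) / 2) := by
    field_simp
  rw [heval, abs_mul, abs_of_pos (div_pos zero_lt_one hr2)]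
  calc 1 / r ^ 2 * |(sSup (u '' ball x r) + sInf (u '' ball x r)) / 2 - u x - r ^ 2 * (B ν ν) / 2|
      ≤ 1 / r ^ 2 * (3 / 2 * ε₁ * r ^ 2) :=
        mul_le_mul_of_nonneg_left hAI (div_pos zero_lt_one hr2).le
    _ = 3 / 2 * ε₁ := by
        field_simp
    _ < ε := by rw [hε₁def]; linarith
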